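/- If G is a connected Helly graph that is (s,s−1)-dismantlable for an integer s ≥ 1, then G is (64s+20)-hyperbolic. -/

import Mathlib

open SimpleGraph

variable {V : Type*}

def gBall (G : SimpleGraph V) (v : V) (r : ℝ) : Set V :=
  {x : V | (G.dist v x : ℝ) ≤ r}

def gInterval (G : SimpleGraph V) (u v : V) : Set V :=
  {x : V | G.dist u x + G.dist x v = G.dist u v}

def IsHyperbolic {W : Type*} (G : SimpleGraph W) (δ : ℝ) : Prop :=
  ∀ u v x y : W,
    (G.dist u v : ℝ) + (G.dist x y : ℝ) ≤
      max ((G.dist u x : ℝ) + (G.dist v y : ℝ)) ((G.dist u y : ℝ) + (G.dist v x : ℝ)) + 2 * δ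

def StarDismantlable (G : SimpleGraph V) (s s' : ℝ) : Prop :=
  ∃ lt : V → V → Prop, IsWellOrder V lt ∧
    ∀ v : V, (∃ w : V, lt w v) →
      ∃ u : V, lt u v ∧ gBall G v s ∩ {w : V | lt w v ∨ w = v} ⊆ gBall G u s'

def gBallRemove (G : SimpleGraph V) (u v : V) (r : ℝ) : Set V :=
  {x : V | ∃ (hv : v ∈ {w : V | w ≠ u}) (hx : x ∈ {w : V | w ≠ u}),
    (G.induce {w : V | w ≠ u}).Reachable ⟨v, hv⟩ ⟨x, hx⟩ ∧
    ((G.induce {w : V | w ≠ u}).dist ⟨v, hv⟩ ⟨x, hx⟩ : ℝ) ≤ r}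

def Dismantlable (G : SimpleGraph V) (s s' : ℝ) : Prop :=
  ∃ lt : V → V → Prop, IsWellOrder V lt ∧
    ∀ v : V, (∃ w : V, lt w v) →
      ∃ u : V, lt u v ∧ gBallRemove G u v s ∩ {w : V | lt w v ∨ w = v} ⊆ gBall G u s'

def WeaklyModular (G : SimpleGraph V) : Prop :=
  (∀ u v w : V, G.dist v w = 1 → 1 < G.dist u v → G.dist u v = G.dist u w →
    ∃ x : V, G.Adj v x ∧ G.Adj w x ∧ G.dist u x + 1 = G.dist u v) ∧
  (∀ u v w z : V, G.dist v z = 1 → G.dist w z = 1 → G.dist v w = 2 →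
    2 ≤ G.dist u v → G.dist u v = G.dist u w → G.dist u z = G.dist u v + 1 →
    ∃ x : V, G.Adj v x ∧ G.Adj w x ∧ G.dist u x + 1 = G.dist u v)

def MetricTriangle (G : SimpleGraph V) (u v w : V) : Prop :=
  gInterval G u v ∩ gInterval G v w = {v} ∧
  gInterval G v w ∩ gInterval G w u = {w} ∧
  gInterval G w u ∩ gInterval G u v = {u}

def HellyGraph (G : SimpleGraph V) : Prop :=
  ∀ (ι : Type) (c : ι → V) (r : ι → ℕ),
    (∀ i j : ι, (gBall G (c i) ((r i : ℕ) : ℝ) ∩ gBall G (c j) ((r j : ℕ) : ℝ)).Nonempty) →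
    (⋂ i : ι, gBall G (c i) ((r i : ℕ) : ℝ)).Nonempty

namespace St16
variable {V : Type*} {G : SimpleGraph V}
def dd (a b : ℕ) : ℕ := (a - b) + (b - a)

lemma dd_cast (a b : ℕ) : (dd a b : ℤ) = |(a : ℤ) - (b : ℤ)| := by
  unfold dd
  rcases abs_cases ((a : ℤ) - (b : ℤ)) with ⟨h1, h2⟩ | ⟨h1, h2⟩ <;> omega

lemma dist_getVert_le (hG : G.Connected) {a b : V} (p : G.Walk a b) :
    ∀ (k : ℕ), G.dist a (p.getVert k) ≤ k := by
  induction p with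
  | nil =>
    intro k
    rw [SimpleGraph.Walk.getVert_of_length_le _ (by simp)]
    simp [SimpleGraph.dist_self]
  | @cons a' b' c' h q ih =>
    intro k
    cases k with
    | zero =>
      simp [SimpleGraph.Walk.getVert, SimpleGraph.dist_self]
    | succ k =>
      have h1 : G.dist a' (q.getVert k) ≤ G.dist a' b' + G.dist b' (q.getVert k) :=
        hG.dist_triangle
      have h2 : G.dist a' b' = 1 := SimpleGraph.dist_eq_one_iff_adj.2 h
      have h3 := ih k
      have h0 : G.dist a' ((SimpleGraph.Walk.cons h q).getVert (k+1))
          = G.dist a' (q.getVert k) := rfl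
      omega

lemma dist_getVert_right_le {a b : V} (p : G.Walk a b) :
    ∀ (k : ℕ), G.dist (p.getVert k) b ≤ p.length - k := by
  induction p with
  | nil =>
    intro k
    rw [SimpleGraph.Walk.getVert_of_length_le _ (by simp)]
    simp
  | cons h q ih =>
    intro k
    cases k with
    | zero =>
      have := SimpleGraph.dist_le (SimpleGraph.Walk.cons h q)
      simp only [SimpleGraph.Walk.getVert]
      simpa using this
    | succ k =>
      have h3 := ih k
      have h4 : (SimpleGraph.Walk.cons h q).length = q.length + 1 := by simp
      rw [SimpleGraph.Walk.getVert_cons_succ]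
      omega

lemma ball_inter (hG : G.Connected) (a b : V) (r1 r2 : ℕ) (h : G.dist a b ≤ r1 + r2) :
    ∃ w, G.dist a w ≤ r1 ∧ G.dist w b ≤ r2 := by
  obtain ⟨p, hp⟩ := hG.exists_walk_length_eq_dist a b
  refine ⟨p.getVert (min r1 (G.dist a b)), ?_, ?_⟩
  · exact (dist_getVert_le hG p _).trans (Nat.min_le_left _ _)
  · have := dist_getVert_right_le p (min r1 (G.dist a b))
    omega

lemma mem_gBall_nat {c a : V} {r : ℕ} : a ∈ gBall G c (r : ℝ) ↔ G.dist c a ≤ r := by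
  rw [gBall, Set.mem_setOf_eq]
  exact_mod_cast Iff.rfl

lemma helly_common (hH : HellyGraph G) (hG : G.Connected) {ι : Type} (c : ι → V) (r : ι → ℕ)
    (h : ∀ i j, G.dist (c i) (c j) ≤ r i + r j) :
    ∃ z, ∀ i, G.dist (c i) z ≤ r i := by
  obtain ⟨z, hz⟩ := hH ι c r (fun i j => by
    obtain ⟨w, h1, h2⟩ := ball_inter hG (c i) (c j) (r i) (r j) (h i j)
    exact ⟨w, mem_gBall_nat.2 h1, mem_gBall_nat.2 (by rwa [SimpleGraph.dist_comm])⟩)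
  exact ⟨z, fun i => mem_gBall_nat.1 (Set.mem_iInter.1 hz i)⟩

lemma abs_dist_sub (hG : G.Connected) (u a b : V) :
    |(G.dist u a : ℤ) - (G.dist u b : ℤ)| ≤ (G.dist a b : ℤ) := by
  have h1 : G.dist u a ≤ G.dist u b + G.dist b a := hG.dist_triangle
  have h2 : G.dist u b ≤ G.dist u a + G.dist a b := hG.dist_triangle
  rw [SimpleGraph.dist_comm (u := b) (v := a)] at h1
  rcases abs_cases ((G.dist u a : ℤ) - (G.dist u b : ℤ)) with ⟨e1, e2⟩ | ⟨e1, e2⟩ <;> omega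

lemma dd_def (a b : ℕ) : dd a b = (a - b) + (b - a) := rfl
inductive Idx (N : ℕ) : Type
  | iu | iv | ix | iy
  | iz (k : Fin N)

set_option maxHeartbeats 1600000 in
lemma construct (hG : G.Connected) (hH : HellyGraph G) (u v x y : V)
    (T AL : ℕ → ℕ) (N : ℕ)
    (hfeas : ∀ i, i < N →
      T i ≤ G.dist u v ∧ AL i ≤ G.dist x y ∧
      G.dist u x ≤ T i + AL i ∧
      G.dist u y + AL i ≤ T i + G.dist x y ∧
      G.dist v x + T i ≤ G.dist u v + AL i ∧
      G.dist v y + T i + AL i ≤ G.dist u v + G.dist x y) :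
    ∃ z : ℕ → V,
      (∀ i, i < N → G.dist u (z i) = T i ∧ G.dist v (z i) = G.dist u v - T i ∧
        G.dist x (z i) = AL i ∧ G.dist y (z i) = G.dist x y - AL i) ∧
      (∀ i, i < N → ∀ j, j < N →
        G.dist (z i) (z j) ≤ max (dd (T i) (T j)) (dd (AL i) (AL j))) := by
  have cuv : G.dist v u = G.dist u v := SimpleGraph.dist_comm ..
  have cxy : G.dist y x = G.dist x y := SimpleGraph.dist_comm ..
  have cux : G.dist x u = G.dist u x := SimpleGraph.dist_comm ..
  have cuy : G.dist y u = G.dist u y := SimpleGraph.dist_comm ..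
  have cvx : G.dist x v = G.dist v x := SimpleGraph.dist_comm ..
  have cvy : G.dist y v = G.dist v y := SimpleGraph.dist_comm ..
  have suu : G.dist u u = 0 := SimpleGraph.dist_self
  have svv : G.dist v v = 0 := SimpleGraph.dist_self
  have sxx : G.dist x x = 0 := SimpleGraph.dist_self
  have syy : G.dist y y = 0 := SimpleGraph.dist_self
  have tri_ux : G.dist u x ≤ G.dist u v + G.dist v x := by
    have := hG.dist_triangle (u := u) (v := v) (w := x); omega
  have tri_uy : G.dist u y ≤ G.dist u v + G.dist v y := by
    have := hG.dist_triangle (u := u) (v := v) (w := y); omega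
  induction N with
  | zero => exact ⟨fun _ => u, fun i hi => absurd hi (by omega), fun i hi => absurd hi (by omega)⟩
  | succ N ih =>
    obtain ⟨z0, hanch, hpair⟩ := ih (fun i hi => hfeas i (by omega))
    obtain ⟨hT, hA, f3, f4, f5, f6⟩ := hfeas N (by omega)
    set cN : Idx N → V := fun i => match i with
      | .iu => u | .iv => v | .ix => x | .iy => y | .iz k => z0 k with hcN
    set rN : Idx N → ℕ := fun i => match i with
      | .iu => T N | .iv => G.dist u v - T N | .ix => AL N | .iy => G.dist x y - AL N
      | .iz k => max (dd (T (k : ℕ)) (T N)) (dd (AL (k : ℕ)) (AL N)) with hrN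
    have hcr : ∀ i j, G.dist (cN i) (cN j) ≤ rN i + rN j := by
      have key : ∀ k : Fin N,
          G.dist u (z0 k) = T (k : ℕ) ∧ G.dist v (z0 k) = G.dist u v - T (k : ℕ) ∧
          G.dist x (z0 k) = AL (k : ℕ) ∧ G.dist y (z0 k) = G.dist x y - AL (k : ℕ) :=
        fun k => hanch k k.isLt
      intro i j
      cases i with
    | iu =>
      cases j with
      | iu =>
        dsimp only [cN, rN]; omega
      | iv =>
        dsimp only [cN, rN]; omega
      | ix =>
        dsimp only [cN, rN]; omega
      | iy =>
        dsimp only [cN, rN]; omega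
      | iz k =>
        rcases key k with ⟨k1, k2, k3, k4⟩
        rcases hfeas k (Nat.lt_succ_of_lt k.isLt) with ⟨g1, g2, g3, g4, g5, g6⟩
        have c1 : G.dist (z0 k) u = G.dist u (z0 k) := SimpleGraph.dist_comm ..
        have c2 : G.dist (z0 k) v = G.dist v (z0 k) := SimpleGraph.dist_comm ..
        have c3 : G.dist (z0 k) x = G.dist x (z0 k) := SimpleGraph.dist_comm ..
        have c4 : G.dist (z0 k) y = G.dist y (z0 k) := SimpleGraph.dist_comm ..
        dsimp only [cN, rN]
        simp only [dd_def]
        omega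
    | iv =>
      cases j with
      | iu =>
        dsimp only [cN, rN]; omega
      | iv =>
        dsimp only [cN, rN]; omega
      | ix =>
        dsimp only [cN, rN]; omega
      | iy =>
        dsimp only [cN, rN]; omega
      | iz k =>
        rcases key k with ⟨k1, k2, k3, k4⟩
        rcases hfeas k (Nat.lt_succ_of_lt k.isLt) with ⟨g1, g2, g3, g4, g5, g6⟩
        have c1 : G.dist (z0 k) u = G.dist u (z0 k) := SimpleGraph.dist_comm ..
        have c2 : G.dist (z0 k) v = G.dist v (z0 k) := SimpleGraph.dist_comm ..
        have c3 : G.dist (z0 k) x = G.dist x (z0 k) := SimpleGraph.dist_comm ..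
        have c4 : G.dist (z0 k) y = G.dist y (z0 k) := SimpleGraph.dist_comm ..
        dsimp only [cN, rN]
        simp only [dd_def]
        omega
    | ix =>
      cases j with
      | iu =>
        dsimp only [cN, rN]; omega
      | iv =>
        dsimp only [cN, rN]; omega
      | ix =>
        dsimp only [cN, rN]; omega
      | iy =>
        dsimp only [cN, rN]; omega
      | iz k =>
        rcases key k with ⟨k1, k2, k3, k4⟩
        rcases hfeas k (Nat.lt_succ_of_lt k.isLt) with ⟨g1, g2, g3, g4, g5, g6⟩
        have c1 : G.dist (z0 k) u = G.dist u (z0 k) := SimpleGraph.dist_comm ..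
        have c2 : G.dist (z0 k) v = G.dist v (z0 k) := SimpleGraph.dist_comm ..
        have c3 : G.dist (z0 k) x = G.dist x (z0 k) := SimpleGraph.dist_comm ..
        have c4 : G.dist (z0 k) y = G.dist y (z0 k) := SimpleGraph.dist_comm ..
        dsimp only [cN, rN]
        simp only [dd_def]
        omega
    | iy =>
      cases j with
      | iu =>
        dsimp only [cN, rN]; omega
      | iv =>
        dsimp only [cN, rN]; omega
      | ix =>
        dsimp only [cN, rN]; omega
      | iy =>
        dsimp only [cN, rN]; omega
      | iz k =>
        rcases key k with ⟨k1, k2, k3, k4⟩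
        rcases hfeas k (Nat.lt_succ_of_lt k.isLt) with ⟨g1, g2, g3, g4, g5, g6⟩
        have c1 : G.dist (z0 k) u = G.dist u (z0 k) := SimpleGraph.dist_comm ..
        have c2 : G.dist (z0 k) v = G.dist v (z0 k) := SimpleGraph.dist_comm ..
        have c3 : G.dist (z0 k) x = G.dist x (z0 k) := SimpleGraph.dist_comm ..
        have c4 : G.dist (z0 k) y = G.dist y (z0 k) := SimpleGraph.dist_comm ..
        dsimp only [cN, rN]
        simp only [dd_def]
        omega
    | iz k =>
      cases j with
      | iu =>
        rcases key k with ⟨k1, k2, k3, k4⟩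
        rcases hfeas k (Nat.lt_succ_of_lt k.isLt) with ⟨g1, g2, g3, g4, g5, g6⟩
        have c1 : G.dist (z0 k) u = G.dist u (z0 k) := SimpleGraph.dist_comm ..
        have c2 : G.dist (z0 k) v = G.dist v (z0 k) := SimpleGraph.dist_comm ..
        have c3 : G.dist (z0 k) x = G.dist x (z0 k) := SimpleGraph.dist_comm ..
        have c4 : G.dist (z0 k) y = G.dist y (z0 k) := SimpleGraph.dist_comm ..
        dsimp only [cN, rN]
        simp only [dd_def]
        omega
      | iv =>
        rcases key k with ⟨k1, k2, k3, k4⟩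
        rcases hfeas k (Nat.lt_succ_of_lt k.isLt) with ⟨g1, g2, g3, g4, g5, g6⟩
        have c1 : G.dist (z0 k) u = G.dist u (z0 k) := SimpleGraph.dist_comm ..
        have c2 : G.dist (z0 k) v = G.dist v (z0 k) := SimpleGraph.dist_comm ..
        have c3 : G.dist (z0 k) x = G.dist x (z0 k) := SimpleGraph.dist_comm ..
        have c4 : G.dist (z0 k) y = G.dist y (z0 k) := SimpleGraph.dist_comm ..
        dsimp only [cN, rN]
        simp only [dd_def]
        omega
      | ix =>
        rcases key k with ⟨k1, k2, k3, k4⟩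
        rcases hfeas k (Nat.lt_succ_of_lt k.isLt) with ⟨g1, g2, g3, g4, g5, g6⟩
        have c1 : G.dist (z0 k) u = G.dist u (z0 k) := SimpleGraph.dist_comm ..
        have c2 : G.dist (z0 k) v = G.dist v (z0 k) := SimpleGraph.dist_comm ..
        have c3 : G.dist (z0 k) x = G.dist x (z0 k) := SimpleGraph.dist_comm ..
        have c4 : G.dist (z0 k) y = G.dist y (z0 k) := SimpleGraph.dist_comm ..
        dsimp only [cN, rN]
        simp only [dd_def]
        omega
      | iy =>
        rcases key k with ⟨k1, k2, k3, k4⟩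
        rcases hfeas k (Nat.lt_succ_of_lt k.isLt) with ⟨g1, g2, g3, g4, g5, g6⟩
        have c1 : G.dist (z0 k) u = G.dist u (z0 k) := SimpleGraph.dist_comm ..
        have c2 : G.dist (z0 k) v = G.dist v (z0 k) := SimpleGraph.dist_comm ..
        have c3 : G.dist (z0 k) x = G.dist x (z0 k) := SimpleGraph.dist_comm ..
        have c4 : G.dist (z0 k) y = G.dist y (z0 k) := SimpleGraph.dist_comm ..
        dsimp only [cN, rN]
        simp only [dd_def]
        omega
      | iz l =>
        rcases key k with ⟨k1, k2, k3, k4⟩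
        rcases key l with ⟨l1, l2, l3, l4⟩
        have hp := hpair k k.isLt l l.isLt
        dsimp only [cN, rN]
        simp only [dd_def] at hp ⊢
        omega
    obtain ⟨zN, hzN⟩ := helly_common hH hG cN rN hcr
    have b1 : G.dist u zN ≤ T N := hzN .iu
    have b2 : G.dist v zN ≤ G.dist u v - T N := hzN .iv
    have b3 : G.dist x zN ≤ AL N := hzN .ix
    have b4 : G.dist y zN ≤ G.dist x y - AL N := hzN .iy
    have b5 : ∀ k : Fin N,
        G.dist (z0 k) zN ≤ max (dd (T (k : ℕ)) (T N)) (dd (AL (k : ℕ)) (AL N)) :=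
      fun k => hzN (.iz k)
    have tri1 : G.dist u v ≤ G.dist u zN + G.dist zN v := hG.dist_triangle
    have tri2 : G.dist x y ≤ G.dist x zN + G.dist zN y := hG.dist_triangle
    have czn1 : G.dist zN v = G.dist v zN := SimpleGraph.dist_comm ..
    have czn2 : G.dist zN y = G.dist y zN := SimpleGraph.dist_comm ..
    have e1 : G.dist u zN = T N := by omega
    have e2 : G.dist v zN = G.dist u v - T N := by omega
    have e3 : G.dist x zN = AL N := by omega
    have e4 : G.dist y zN = G.dist x y - AL N := by omega
    refine ⟨fun i => if i = N then zN else z0 i, ?_, ?_⟩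
    · intro i hi
      beta_reduce
      by_cases h : i = N
      · have hzi : (if i = N then zN else z0 i) = zN := if_pos h
        rw [hzi, h]
        exact ⟨e1, e2, e3, e4⟩
      · have hzi : (if i = N then zN else z0 i) = z0 i := if_neg h
        rw [hzi]
        exact hanch i (by omega)
    · intro i hi j hj
      beta_reduce
      by_cases h1 : i = N <;> by_cases h2 : j = N
      · have hzi : (if i = N then zN else z0 i) = zN := if_pos h1
        have hzj : (if j = N then zN else z0 j) = zN := if_pos h2
        rw [hzi, hzj, SimpleGraph.dist_self]
        omega
      · have hb := b5 ⟨j, by omega⟩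
        have hc : G.dist zN (z0 j) = G.dist (z0 j) zN := SimpleGraph.dist_comm ..
        have hzi : (if i = N then zN else z0 i) = zN := if_pos h1
        have hzj : (if j = N then zN else z0 j) = z0 j := if_neg h2
        rw [hzi, hzj, h1]
        simp only at hb
        unfold dd at hb ⊢
        omega
      · have hb := b5 ⟨i, by omega⟩
        have hzi : (if i = N then zN else z0 i) = z0 i := if_neg h1
        have hzj : (if j = N then zN else z0 j) = zN := if_pos h2
        rw [hzi, hzj, h2]
        simp only at hb
        unfold dd at hb ⊢
        omega
      · simp only [if_neg h1, if_neg h2]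
        exact hpair i (by omega) j (by omega)
/-- Triangle wave with period `4n`, range `[-n, n]`, folds at multiples of `2n`. -/
def wv (n θ : ℤ) : ℤ := |θ % (4 * n) - 2 * n| - n

lemma wv_emod_bounds {n : ℤ} (hn : 0 < n) (θ : ℤ) :
    0 ≤ θ % (4 * n) ∧ θ % (4 * n) < 4 * n :=
  ⟨Int.emod_nonneg θ (by omega), Int.emod_lt_of_pos θ (by omega)⟩

lemma wv_abs_le {n : ℤ} (hn : 0 < n) (θ : ℤ) : |wv n θ| ≤ n := by
  obtain ⟨h1, h2⟩ := wv_emod_bounds hn θ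
  unfold wv
  rcases abs_cases (θ % (4 * n) - 2 * n) with ⟨e1, e2⟩ | ⟨e1, e2⟩ <;>
    rcases abs_cases (|θ % (4 * n) - 2 * n| - n) with ⟨f1, f2⟩ | ⟨f1, f2⟩ <;> omega

lemma wv_periodic {n : ℤ} (hn : 0 < n) (θ k : ℤ) : wv n (θ + 4 * n * k) = wv n θ := by
  unfold wv
  rw [Int.add_mul_emod_self_left]

/-- value of `wv` on a "low" window `[4ni, 4ni + 2n]`. -/
lemma wv_val_lo {n : ℤ} (hn : 0 < n) {i ξ : ℤ} (h1 : 4 * n * i ≤ ξ) (h2 : ξ ≤ 4 * n * i + 2 * n) :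
    wv n ξ = n - (ξ - 4 * n * i) := by
  have hmod : ξ % (4 * n) = ξ - 4 * n * i := by
    have : ξ % (4 * n) = (ξ - 4 * n * i) % (4 * n) := by
      conv_lhs => rw [show ξ = (ξ - 4 * n * i) + 4 * n * i by ring]
      rw [Int.add_mul_emod_self_left]
    rw [this, Int.emod_eq_of_lt (by omega) (by omega)]
  unfold wv
  rw [hmod]
  rcases abs_cases (ξ - 4 * n * i - 2 * n) with ⟨e1, e2⟩ | ⟨e1, e2⟩ <;> omega

/-- value of `wv` on a "high" window `[4ni + 2n, 4ni + 4n]`. -/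
lemma wv_val_hi {n : ℤ} (hn : 0 < n) {i ξ : ℤ} (h1 : 4 * n * i + 2 * n ≤ ξ)
    (h2 : ξ ≤ 4 * n * i + 4 * n) :
    wv n ξ = (ξ - 4 * n * i) - 3 * n := by
  rcases eq_or_lt_of_le h2 with he | hlt
  · have hmod : ξ % (4 * n) = 0 := by
      rw [he]
      have : 4 * n * i + 4 * n = 4 * n * (i + 1) := by ring
      rw [this, Int.mul_emod_right]
    unfold wv
    rw [hmod, he]
    rcases abs_cases ((0 : ℤ) - 2 * n) with ⟨e1, e2⟩ | ⟨e1, e2⟩ <;> omega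
  · have hmod : ξ % (4 * n) = ξ - 4 * n * i := by
      have : ξ % (4 * n) = (ξ - 4 * n * i) % (4 * n) := by
        conv_lhs => rw [show ξ = (ξ - 4 * n * i) + 4 * n * i by ring]
        rw [Int.add_mul_emod_self_left]
      rw [this, Int.emod_eq_of_lt (by omega) (by omega)]
    unfold wv
    rw [hmod]
    rcases abs_cases (ξ - 4 * n * i - 2 * n) with ⟨e1, e2⟩ | ⟨e1, e2⟩ <;> omega

/-- `wv` is linear (slope ±1) on any window `[2nj, 2n(j+1)]`. -/
lemma wv_window {n : ℤ} (hn : 0 < n) {j θ θ' : ℤ} (h1 : 2 * n * j ≤ θ) (h2 : θ ≤ θ')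
    (h3 : θ' ≤ 2 * n * (j + 1)) : |wv n θ' - wv n θ| = θ' - θ := by
  rcases Int.even_or_odd j with ⟨i, hi⟩ | ⟨i, hi⟩
  · subst hi
    have r1 : 2 * n * (i + i) = 4 * n * i := by ring
    have r2 : 2 * n * (i + i + 1) = 4 * n * i + 2 * n := by ring
    have e1 : wv n θ = n - (θ - 4 * n * i) := wv_val_lo hn (by omega) (by omega)
    have e2 : wv n θ' = n - (θ' - 4 * n * i) := wv_val_lo hn (by omega) (by omega)
    rw [e1, e2]
    rcases abs_cases (n - (θ' - 4 * n * i) - (n - (θ - 4 * n * i))) with ⟨f1, f2⟩ | ⟨f1, f2⟩ <;>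
      omega
  · subst hi
    have r1 : 2 * n * (2 * i + 1) = 4 * n * i + 2 * n := by ring
    have r2 : 2 * n * (2 * i + 1 + 1) = 4 * n * i + 4 * n := by ring
    have e1 : wv n θ = (θ - 4 * n * i) - 3 * n := wv_val_hi hn (by omega) (by omega)
    have e2 : wv n θ' = (θ' - 4 * n * i) - 3 * n := wv_val_hi hn (by omega) (by omega)
    rw [e1, e2]
    rcases abs_cases ((θ' - 4 * n * i) - 3 * n - ((θ - 4 * n * i) - 3 * n)) with ⟨f1, f2⟩ | ⟨f1, f2⟩ <;>
      omega

/-- Local lower bound: on scales up to `n`, one of the two quadrature waves moves at full speed. -/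
lemma wv_lower {n : ℤ} (hn : 0 < n) {θ θ' : ℤ} (h1 : θ ≤ θ') (h2 : θ' - θ ≤ n) :
    θ' - θ ≤ max |wv n θ' - wv n θ| |wv n (θ' - n) - wv n (θ - n)| := by
  set q : ℤ := θ / (2 * n) with hq
  have hdiv : 2 * n * q + θ % (2 * n) = θ := Int.mul_ediv_add_emod θ (2 * n)
  have hge : 0 ≤ θ % (2 * n) := Int.emod_nonneg θ (by omega)
  have hlt : θ % (2 * n) < 2 * n := Int.emod_lt_of_pos θ (by omega)
  by_cases hc : θ % (2 * n) + (θ' - θ) ≤ 2 * n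
  · have hw := wv_window hn (j := q) (θ := θ) (θ' := θ')
      (by omega) h1 (by have : 2 * n * (q + 1) = 2 * n * q + 2 * n := by ring
                        omega)
    have := le_max_left |wv n θ' - wv n θ| |wv n (θ' - n) - wv n (θ - n)|
    omega
  · have hw := wv_window hn (j := q) (θ := θ - n) (θ' := θ' - n)
      (by omega) (by omega) (by have : 2 * n * (q + 1) = 2 * n * q + 2 * n := by ring
                                omega)
    have := le_max_right |wv n θ' - wv n θ| |wv n (θ' - n) - wv n (θ - n)|
    omega
lemma wv_step {n : ℤ} (hn : 0 < n) (θ : ℤ) : |wv n (θ + 1) - wv n θ| ≤ 1 := by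
  have hge : 0 ≤ θ % (4 * n) := Int.emod_nonneg θ (by omega)
  have hlt : θ % (4 * n) < 4 * n := Int.emod_lt_of_pos θ (by omega)
  have e0 : θ + 1 = (θ % (4 * n) + 1) + 4 * n * (θ / (4 * n)) := by
    have := Int.mul_ediv_add_emod θ (4 * n); omega
  have e1 : (θ + 1) % (4 * n) = (θ % (4 * n) + 1) % (4 * n) := by
    rw [e0, Int.add_mul_emod_self_left]
  by_cases h : θ % (4 * n) + 1 < 4 * n
  · have e2 : (θ + 1) % (4 * n) = θ % (4 * n) + 1 := by
      rw [e1, Int.emod_eq_of_lt (by omega) (by omega)]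
    unfold wv
    rw [e2]
    rcases abs_cases (θ % (4 * n) + 1 - 2 * n) with ⟨a1, a2⟩ | ⟨a1, a2⟩ <;>
      rcases abs_cases (θ % (4 * n) - 2 * n) with ⟨b1, b2⟩ | ⟨b1, b2⟩ <;>
      rcases abs_cases (|θ % (4 * n) + 1 - 2 * n| - n - (|θ % (4 * n) - 2 * n| - n)) with
        ⟨c1, c2⟩ | ⟨c1, c2⟩ <;> omega
  · have hm : θ % (4 * n) = 4 * n - 1 := by omega
    have e2 : (θ + 1) % (4 * n) = 0 := by
      rw [e1, hm]
      simp
    unfold wv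
    rw [e2, hm]
    rcases abs_cases ((0 : ℤ) - 2 * n) with ⟨a1, a2⟩ | ⟨a1, a2⟩ <;>
      rcases abs_cases (4 * n - 1 - 2 * n) with ⟨b1, b2⟩ | ⟨b1, b2⟩ <;>
      rcases abs_cases (|(0 : ℤ) - 2 * n| - n - (|4 * n - 1 - 2 * n| - n)) with
        ⟨c1, c2⟩ | ⟨c1, c2⟩ <;> omega

lemma finset_max (lt : V → V → Prop) (hwo : IsWellOrder V lt) (S : Finset V)
    (hS : S.Nonempty) : ∃ m ∈ S, ∀ b ∈ S, b = m ∨ lt b m := by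
  classical
  induction S using Finset.induction_on with
  | empty => simp at hS
  | @insert a S' ha ih =>
    by_cases hS' : S'.Nonempty
    · obtain ⟨m, hm, hmax⟩ := ih hS'
      rcases (show lt a m ∨ a = m ∨ lt m a by by_contra hc; push_neg at hc; exact hc.2.1 (hwo.trichotomous a m hc.1 hc.2.2)) with h | h | h
      · exact ⟨m, Finset.mem_insert_of_mem hm, by
          intro b hb
          rcases Finset.mem_insert.1 hb with rfl | hb
          · exact Or.inr h
          · exact hmax b hb⟩
      · exact ⟨m, Finset.mem_insert_of_mem hm, by
          intro b hb
          rcases Finset.mem_insert.1 hb with rfl | hb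
          · exact Or.inl h
          · exact hmax b hb⟩
      · refine ⟨a, Finset.mem_insert_self a S', ?_⟩
        intro b hb
        rcases Finset.mem_insert.1 hb with rfl | hb
        · exact Or.inl rfl
        · rcases hmax b hb with rfl | hblt
          · exact Or.inr h
          · exact Or.inr (_root_.trans_of lt hblt h)
    · rw [Finset.not_nonempty_iff_eq_empty] at hS'
      subst hS'
      exact ⟨a, Finset.mem_insert_self a ∅, by
        intro b hb
        rcases Finset.mem_insert.1 hb with rfl | hb
        · exact Or.inl rfl
        · simp at hb⟩

lemma induced_walk (u0 : V) (f : ℕ → V) :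
    ∀ (k : ℕ), (∀ j, j ≤ k → f j ≠ u0) → (∀ j, j < k → G.Adj (f j) (f (j + 1))) →
    ∃ (h0 : f 0 ∈ {w : V | w ≠ u0}) (hk : f k ∈ {w : V | w ≠ u0})
      (p : (G.induce {w : V | w ≠ u0}).Walk ⟨f 0, h0⟩ ⟨f k, hk⟩), p.length ≤ k := by
  intro k
  induction k with
  | zero =>
    intro hne _
    exact ⟨hne 0 le_rfl, hne 0 le_rfl, SimpleGraph.Walk.nil, by simp⟩
  | succ k ih =>
    intro hne hadj
    obtain ⟨h0, hk, p, hp⟩ := ih (fun j hj => hne j (by omega)) (fun j hj => hadj j (by omega))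
    have hk1 : f (k + 1) ∈ {w : V | w ≠ u0} := hne (k + 1) le_rfl
    have hAdj : (G.induce {w : V | w ≠ u0}).Adj ⟨f k, hk⟩ ⟨f (k + 1), hk1⟩ := by
      simp only [SimpleGraph.comap_adj, Function.Embedding.coe_subtype]
      exact hadj k (by omega)
    exact ⟨h0, hk1, p.concat hAdj, by rw [SimpleGraph.Walk.length_concat]; omega⟩
end St16

set_option maxHeartbeats 3200000 in
theorem statement16 (V : Type*) (G : SimpleGraph V) (hG : G.Connected)
    (hH : HellyGraph G)
    (s : ℕ) (hs : 1 ≤ s)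
    (hd : Dismantlable G (s : ℝ) ((s : ℝ) - 1)) :
    IsHyperbolic G (64 * (s : ℝ) + 20) := by
  classical
  intro u v x y
  by_contra hcon
  push_neg at hcon
  obtain ⟨lt, hwo, helim⟩ := hd
  haveI : IsWellOrder V lt := hwo
  set A := G.dist u x with hA
  set B := G.dist v y with hB
  set C := G.dist u y with hC
  set F := G.dist v x with hF
  set D := G.dist u v with hD
  set E := G.dist x y with hE
  have hab : A + B + (128 * s + 41) ≤ D + E := by
    have h1 : ((A : ℝ) + B) + (128 * s + 40) < (D : ℝ) + E := by
      have h0 := le_max_left ((A : ℝ) + B) ((C : ℝ) + F)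
      nlinarith [hcon]
    have h2 : ((A + B + (128 * s + 40) : ℕ) : ℝ) < ((D + E : ℕ) : ℝ) := by push_cast; linarith
    have h3 : A + B + (128 * s + 40) < D + E := by exact_mod_cast h2
    omega
  have hcf : C + F + (128 * s + 41) ≤ D + E := by
    have h1 : ((C : ℝ) + F) + (128 * s + 40) < (D : ℝ) + E := by
      have h0 := le_max_right ((A : ℝ) + B) ((C : ℝ) + F)
      nlinarith [hcon]
    have h2 : ((C + F + (128 * s + 40) : ℕ) : ℝ) < ((D + E : ℕ) : ℝ) := by push_cast; linarith
    have h3 : C + F + (128 * s + 40) < D + E := by exact_mod_cast h2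
    omega
  have tr1 : E ≤ A + C := by
    have h := hG.dist_triangle (u := x) (v := u) (w := y)
    have c1 : G.dist x u = A := SimpleGraph.dist_comm ..
    omega
  have tr2 : D ≤ A + F := by
    have h := hG.dist_triangle (u := u) (v := x) (w := v)
    have c1 : G.dist x v = F := SimpleGraph.dist_comm ..
    omega
  have tr3 : D ≤ C + B := by
    have h := hG.dist_triangle (u := u) (v := y) (w := v)
    have c1 : G.dist y v = B := SimpleGraph.dist_comm ..
    omega
  have tr4 : E ≤ F + B := by
    have h := hG.dist_triangle (u := x) (v := v) (w := y)
    have c1 : G.dist x v = F := SimpleGraph.dist_comm ..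
    omega
  have tr5 : C ≤ D + B := hG.dist_triangle
  -- diamond parameters
  set n : ℕ := 2 * s + 2 with hn
  set e : ℕ := (A + C + E) % 2 with he
  have he1 : e ≤ 1 := by omega
  set m : ℕ := A + C + e - E with hm
  have hmE : m + E = A + C + e := by omega
  have hmeven : m % 2 = 0 := by omega
  set k : ℕ := m / 2 with hk
  have hk2 : 2 * k = m := by omega
  set tstar : ℕ := k + 2 * n with htstar
  have h2t : 2 * tstar = m + 4 * n := by omega
  have hAEC : C + (128 * s + 41) ≤ A + E := by omega
  set m' : ℕ := A + E + e - C with hm'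
  have hm'C : m' + C = A + E + e := by omega
  have hm'even : m' % 2 = 0 := by omega
  set k' : ℕ := m' / 2 with hk'
  set alstar : ℕ := k' with halstar
  have h2a : 2 * alstar = m' := by omega
  have halge : n ≤ alstar := by omega
  have htge : n ≤ tstar := by omega
  set nz : ℤ := (n : ℤ) with hnz
  have hnzpos : 0 < nz := by omega
  set T : ℕ → ℕ := fun i => ((tstar : ℤ) + St16.wv nz (i : ℤ)).toNat with hT
  set AL : ℕ → ℕ := fun i => ((alstar : ℤ) + St16.wv nz ((i : ℤ) - nz)).toNat with hAL
  have hTcast : ∀ θ : ℤ, (T ((θ % (4 * nz)).toNat) : ℤ) = (tstar : ℤ) + St16.wv nz θ := by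
    intro θ
    have h1 : 0 ≤ θ % (4 * nz) := Int.emod_nonneg θ (by omega)
    have h2 : ((θ % (4 * nz)).toNat : ℤ) = θ % (4 * nz) := Int.toNat_of_nonneg h1
    have hper : St16.wv nz (((θ % (4 * nz)).toNat : ℕ) : ℤ) = St16.wv nz θ := by
      rw [h2]
      have h3 : θ = θ % (4 * nz) + 4 * nz * (θ / (4 * nz)) := by
        have := Int.mul_ediv_add_emod θ (4 * nz); omega
      conv_rhs => rw [h3]
      rw [St16.wv_periodic hnzpos]
    rw [hT]
    simp only
    rw [hper]
    have hb := abs_le.mp (St16.wv_abs_le hnzpos θ)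
    rw [Int.toNat_of_nonneg (by omega)]
  have hALcast : ∀ θ : ℤ, (AL ((θ % (4 * nz)).toNat) : ℤ)
      = (alstar : ℤ) + St16.wv nz (θ - nz) := by
    intro θ
    have h1 : 0 ≤ θ % (4 * nz) := Int.emod_nonneg θ (by omega)
    have h2 : ((θ % (4 * nz)).toNat : ℤ) = θ % (4 * nz) := Int.toNat_of_nonneg h1
    have hper : St16.wv nz ((((θ % (4 * nz)).toNat : ℕ) : ℤ) - nz) = St16.wv nz (θ - nz) := by
      rw [h2]
      have h3 : θ % (4 * nz) = θ - 4 * nz * (θ / (4 * nz)) := by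
        have := Int.mul_ediv_add_emod θ (4 * nz); omega
      rw [h3]
      have h4 : θ - 4 * nz * (θ / (4 * nz)) - nz = (θ - nz) + 4 * nz * (-(θ / (4 * nz))) := by
        ring
      rw [h4, St16.wv_periodic hnzpos]
    rw [hAL]; simp only
    rw [hper]
    have hb := abs_le.mp (St16.wv_abs_le hnzpos (θ - nz))
    rw [Int.toNat_of_nonneg (by omega)]
  have hfeas : ∀ i, i < 4 * n →
      T i ≤ D ∧ AL i ≤ E ∧ A ≤ T i + AL i ∧ C + AL i ≤ T i + E ∧
      F + T i ≤ D + AL i ∧ B + T i + AL i ≤ D + E := by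
    intro i hi
    have hbT := abs_le.mp (St16.wv_abs_le hnzpos (i : ℤ))
    have hbA := abs_le.mp (St16.wv_abs_le hnzpos ((i : ℤ) - nz))
    have hTi : (T i : ℤ) = (tstar : ℤ) + St16.wv nz (i : ℤ) := by
      rw [hT]; simp only
      rw [Int.toNat_of_nonneg (by omega)]
    have hAi : (AL i : ℤ) = (alstar : ℤ) + St16.wv nz ((i : ℤ) - nz) := by
      rw [hAL]; simp only
      rw [Int.toNat_of_nonneg (by omega)]
    refine ⟨?_, ?_, ?_, ?_, ?_, ?_⟩ <;> omega
  have hfeas' : ∀ i, i < 4 * n →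
      T i ≤ G.dist u v ∧ AL i ≤ G.dist x y ∧
      G.dist u x ≤ T i + AL i ∧
      G.dist u y + AL i ≤ T i + G.dist x y ∧
      G.dist v x + T i ≤ G.dist u v + AL i ∧
      G.dist v y + T i + AL i ≤ G.dist u v + G.dist x y := by
    intro i hi
    have h := hfeas i hi
    omega
  obtain ⟨z, hanch, hpair⟩ := St16.construct hG hH u v x y T AL (4 * n) hfeas'
  set Z : ℤ → V := fun θ => z ((θ % (4 * nz)).toNat) with hZ
  have hidx : ∀ θ : ℤ, ((θ % (4 * nz)).toNat) < 4 * n := by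
    intro θ
    have h1 : 0 ≤ θ % (4 * nz) := Int.emod_nonneg θ (by omega)
    have h2 : θ % (4 * nz) < 4 * nz := Int.emod_lt_of_pos θ (by omega)
    omega
  have hanchU : ∀ θ : ℤ, (G.dist u (Z θ) : ℤ) = (tstar : ℤ) + St16.wv nz θ := by
    intro θ
    have h1 := (hanch _ (hidx θ)).1
    rw [hZ]; simp only
    rw [h1]
    exact hTcast θ
  have hanchX : ∀ θ : ℤ, (G.dist x (Z θ) : ℤ) = (alstar : ℤ) + St16.wv nz (θ - nz) := by
    intro θ
    have h1 := (hanch _ (hidx θ)).2.2.1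
    rw [hZ]; simp only
    rw [h1]
    exact hALcast θ
  have hlow : ∀ θ θ' : ℤ, θ ≤ θ' → θ' - θ ≤ nz → θ' - θ ≤ (G.dist (Z θ) (Z θ') : ℤ) := by
    intro θ θ' h1 h2
    have d1 := St16.abs_dist_sub hG u (Z θ) (Z θ')
    have d2 := St16.abs_dist_sub hG x (Z θ) (Z θ')
    rw [hanchU θ, hanchU θ'] at d1
    rw [hanchX θ, hanchX θ'] at d2
    have e1 : (tstar : ℤ) + St16.wv nz θ - ((tstar : ℤ) + St16.wv nz θ')
        = St16.wv nz θ - St16.wv nz θ' := by ring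
    have e2 : (alstar : ℤ) + St16.wv nz (θ - nz) - ((alstar : ℤ) + St16.wv nz (θ' - nz))
        = St16.wv nz (θ - nz) - St16.wv nz (θ' - nz) := by ring
    rw [e1, abs_sub_comm] at d1
    rw [e2, abs_sub_comm] at d2
    have hw := St16.wv_lower hnzpos h1 h2
    omega
  have hstep : ∀ θ : ℤ, G.dist (Z θ) (Z (θ + 1)) ≤ 1 := by
    intro θ
    have hp := hpair _ (hidx θ) _ (hidx (θ + 1))
    have hT1 := hTcast θ
    have hT2 := hTcast (θ + 1)
    have hA1 := hALcast θ
    have hA2 := hALcast (θ + 1)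
    have hs1 := St16.wv_step hnzpos θ
    have hs2 := St16.wv_step hnzpos (θ - nz)
    have e3 : θ + 1 - nz = (θ - nz) + 1 := by ring
    rw [e3] at hA2
    have c1 := St16.dd_cast (T ((θ % (4 * nz)).toNat)) (T (((θ + 1) % (4 * nz)).toNat))
    have c2 := St16.dd_cast (AL ((θ % (4 * nz)).toNat)) (AL (((θ + 1) % (4 * nz)).toNat))
    rw [hT1, hT2] at c1
    rw [hA1, hA2] at c2
    have e4 : (tstar : ℤ) + St16.wv nz θ - ((tstar : ℤ) + St16.wv nz (θ + 1))
        = -(St16.wv nz (θ + 1) - St16.wv nz θ) := by ring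
    have e5 : (alstar : ℤ) + St16.wv nz (θ - nz) - ((alstar : ℤ) + St16.wv nz ((θ - nz) + 1))
        = -(St16.wv nz ((θ - nz) + 1) - St16.wv nz (θ - nz)) := by ring
    rw [e4, abs_neg] at c1
    rw [e5, abs_neg] at c2
    show G.dist (z ((θ % (4 * nz)).toNat)) (z (((θ + 1) % (4 * nz)).toNat)) ≤ 1
    omega
  have hadjZ : ∀ θ : ℤ, G.Adj (Z θ) (Z (θ + 1)) := by
    intro θ
    have h1 := hstep θ
    have h2 := hlow θ (θ + 1) (by omega) (by omega)
    have h3 : G.dist (Z θ) (Z (θ + 1)) = 1 := by omega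
    exact SimpleGraph.dist_eq_one_iff_adj.mp h3
  set S : Finset V := (Finset.range (4 * n)).image z with hSdef
  have hZS : ∀ θ : ℤ, Z θ ∈ S := fun θ =>
    Finset.mem_image.2 ⟨_, Finset.mem_range.2 (hidx θ), rfl⟩
  have hSne : S.Nonempty := ⟨Z 0, hZS 0⟩
  obtain ⟨vstar, hvS, hmax⟩ := St16.finset_max lt hwo S hSne
  obtain ⟨i0, hi0r, hi0⟩ := Finset.mem_image.1 hvS
  have hi0n : i0 < 4 * n := Finset.mem_range.1 hi0r
  set θ0 : ℤ := (i0 : ℤ) with hθ0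
  have hZθ0 : Z θ0 = vstar := by
    rw [hZ]; simp only
    have h1 : θ0 % (4 * nz) = θ0 := Int.emod_eq_of_lt (by omega) (by omega)
    rw [h1]
    have h2 : (θ0).toNat = i0 := by omega
    rw [h2]; exact hi0
  have hexlt : ∃ w, lt w vstar := by
    have h1 := hlow θ0 (θ0 + 1) (by omega) (by omega)
    have hne : Z (θ0 + 1) ≠ vstar := by
      intro hcontra
      rw [← hZθ0] at hcontra
      rw [hcontra] at h1
      rw [SimpleGraph.dist_self] at h1
      omega
    rcases hmax _ (hZS (θ0 + 1)) with h | h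
    · exact absurd h hne
    · exact ⟨_, h⟩
  obtain ⟨ustar, hult, hsub⟩ := helim vstar hexlt
  have huv_ne : ustar ≠ vstar := by
    intro hcontra; subst hcontra; exact _root_.irrefl ustar hult
  have hvu_mem : vstar ∈ gBallRemove G ustar vstar (s : ℝ) := by
    refine ⟨Ne.symm huv_ne, Ne.symm huv_ne, SimpleGraph.Reachable.refl _, ?_⟩
    rw [SimpleGraph.dist_self]
    exact_mod_cast Nat.zero_le s
  have hduv : G.dist ustar vstar + 1 ≤ s := by
    have h1 := hsub ⟨hvu_mem, Or.inr rfl⟩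
    have h2 : (G.dist ustar vstar : ℝ) ≤ (s : ℝ) - 1 := h1
    have h3 : (G.dist ustar vstar : ℝ) + 1 ≤ (s : ℝ) := by linarith
    exact_mod_cast h3
  have arm : ∀ g : ℕ → V, g 0 = vstar → (∀ j, j < s → G.Adj (g j) (g (j + 1))) →
      (∀ j, j ≤ s → g j ≠ ustar) → g s ∈ S → G.dist ustar (g s) + 1 ≤ s := by
    intro g hg0 hgadj hgne hgS
    obtain ⟨h0, hk', p, hp⟩ := St16.induced_walk (G := G) ustar g s hgne hgadj
    have hv0 : vstar ∈ {w : V | w ≠ ustar} := Ne.symm huv_ne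
    have hmemB : g s ∈ gBallRemove G ustar vstar (s : ℝ) := by
      have hpt : (⟨g 0, h0⟩ : {w : V | w ≠ ustar}) = ⟨vstar, hv0⟩ := Subtype.ext hg0
      refine ⟨hv0, hk', ⟨p.copy hpt rfl⟩, ?_⟩
      have hdle := SimpleGraph.dist_le (p.copy hpt rfl)
      rw [SimpleGraph.Walk.length_copy] at hdle
      exact_mod_cast Nat.cast_le.mpr (le_trans hdle hp)
    have h1 := hsub ⟨hmemB, Or.symm (hmax _ hgS)⟩
    have h2 : (G.dist ustar (g s) : ℝ) ≤ (s : ℝ) - 1 := h1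
    have h3 : (G.dist ustar (g s) : ℝ) + 1 ≤ (s : ℝ) := by linarith
    exact_mod_cast h3
  have hadjL : ∀ j, j < s → G.Adj (Z (θ0 - (j : ℤ))) (Z (θ0 - ((j + 1 : ℕ) : ℤ))) := by
    intro j hj
    have h := (hadjZ (θ0 - ((j : ℤ) + 1))).symm
    have e1 : θ0 - ((j : ℤ) + 1) + 1 = θ0 - (j : ℤ) := by ring
    rw [e1] at h
    have e2 : ((j + 1 : ℕ) : ℤ) = (j : ℤ) + 1 := by push_cast; ring
    rw [e2]
    exact h
  have hadjR : ∀ j, j < s → G.Adj (Z (θ0 + (j : ℤ))) (Z (θ0 + ((j + 1 : ℕ) : ℤ))) := by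
    intro j hj
    have h := hadjZ (θ0 + (j : ℤ))
    have e2 : ((j + 1 : ℕ) : ℤ) = (j : ℤ) + 1 := by push_cast; ring
    rw [e2]
    have e1 : θ0 + ((j : ℤ) + 1) = θ0 + (j : ℤ) + 1 := by ring
    rw [e1]
    exact h
  have hZne : ∀ θ θ' : ℤ, θ < θ' → θ' - θ ≤ nz → Z θ ≠ Z θ' := by
    intro θ θ' h1 h2 hcontra
    have h3 := hlow θ θ' (by omega) h2
    rw [hcontra, SimpleGraph.dist_self] at h3
    omega
  by_cases hR : ∃ j : ℕ, 1 ≤ j ∧ j ≤ s ∧ Z (θ0 + (j : ℤ)) = ustar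
  · obtain ⟨i, hi1, hi2, hieq⟩ := hR
    have harm : G.dist ustar (Z (θ0 - ((s : ℕ) : ℤ))) + 1 ≤ s := by
      refine arm (fun j => Z (θ0 - (j : ℤ))) ?_ hadjL ?_ (hZS _)
      · show Z (θ0 - ((0 : ℕ) : ℤ)) = vstar
        rw [show θ0 - ((0 : ℕ) : ℤ) = θ0 by push_cast; ring]
        exact hZθ0
      · intro j hj
        show Z (θ0 - (j : ℤ)) ≠ ustar
        rw [← hieq]
        exact hZne (θ0 - (j : ℤ)) (θ0 + (i : ℤ)) (by omega) (by omega)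
    have hlb := hlow (θ0 - ((s : ℕ) : ℤ)) (θ0 + (i : ℤ)) (by omega) (by omega)
    rw [hieq] at hlb
    have hcomm : G.dist (Z (θ0 - ((s : ℕ) : ℤ))) ustar
        = G.dist ustar (Z (θ0 - ((s : ℕ) : ℤ))) := SimpleGraph.dist_comm ..
    omega
  · by_cases hL : ∃ j : ℕ, 1 ≤ j ∧ j ≤ s ∧ Z (θ0 - (j : ℤ)) = ustar
    · obtain ⟨i, hi1, hi2, hieq⟩ := hL
      have harm : G.dist ustar (Z (θ0 + ((s : ℕ) : ℤ))) + 1 ≤ s := by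
        refine arm (fun j => Z (θ0 + (j : ℤ))) ?_ hadjR ?_ (hZS _)
        · show Z (θ0 + ((0 : ℕ) : ℤ)) = vstar
          rw [show θ0 + ((0 : ℕ) : ℤ) = θ0 by push_cast; ring]
          exact hZθ0
        · intro j hj
          show Z (θ0 + (j : ℤ)) ≠ ustar
          rw [← hieq]
          intro hcontra
          exact hZne (θ0 - (i : ℤ)) (θ0 + (j : ℤ)) (by omega) (by omega) hcontra.symm
      have hlb := hlow (θ0 - (i : ℤ)) (θ0 + ((s : ℕ) : ℤ)) (by omega) (by omega)
      rw [hieq] at hlb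
      omega
    · push_neg at hR hL
      have hneR : ∀ j, j ≤ s → Z (θ0 + (j : ℤ)) ≠ ustar := by
        intro j hj
        rcases Nat.eq_zero_or_pos j with rfl | hj1
        · rw [show θ0 + ((0 : ℕ) : ℤ) = θ0 by push_cast; ring, hZθ0]
          exact Ne.symm huv_ne
        · exact hR j hj1 hj
      have hneL : ∀ j, j ≤ s → Z (θ0 - (j : ℤ)) ≠ ustar := by
        intro j hj
        rcases Nat.eq_zero_or_pos j with rfl | hj1
        · rw [show θ0 - ((0 : ℕ) : ℤ) = θ0 by push_cast; ring, hZθ0]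
          exact Ne.symm huv_ne
        · exact hL j hj1 hj
      have harmR : G.dist ustar (Z (θ0 + ((s : ℕ) : ℤ))) + 1 ≤ s := by
        refine arm (fun j => Z (θ0 + (j : ℤ))) ?_ hadjR hneR (hZS _)
        show Z (θ0 + ((0 : ℕ) : ℤ)) = vstar
        rw [show θ0 + ((0 : ℕ) : ℤ) = θ0 by push_cast; ring]
        exact hZθ0
      have harmL : G.dist ustar (Z (θ0 - ((s : ℕ) : ℤ))) + 1 ≤ s := by
        refine arm (fun j => Z (θ0 - (j : ℤ))) ?_ hadjL hneL (hZS _)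
        show Z (θ0 - ((0 : ℕ) : ℤ)) = vstar
        rw [show θ0 - ((0 : ℕ) : ℤ) = θ0 by push_cast; ring]
        exact hZθ0
      have hlb := hlow (θ0 - ((s : ℕ) : ℤ)) (θ0 + ((s : ℕ) : ℤ)) (by omega) (by omega)
      have htri : G.dist (Z (θ0 - ((s : ℕ) : ℤ))) (Z (θ0 + ((s : ℕ) : ℤ)))
          ≤ G.dist (Z (θ0 - ((s : ℕ) : ℤ))) ustar + G.dist ustar (Z (θ0 + ((s : ℕ) : ℤ))) :=
        hG.dist_triangle
      have hcomm : G.dist (Z (θ0 - ((s : ℕ) : ℤ))) ustar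
          = G.dist ustar (Z (θ0 - ((s : ℕ) : ℤ))) := SimpleGraph.dist_comm ..
      omega
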